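/- Let n = n_x + n_y, and let Q_{ij} (i,j = 1,2,3) be 3×3 blocks of a 9×9 orthogonal matrix Q (i.e., Q^T Q = I_9 where Q has block rows [Q_{1j}], [Q_{2j}], [Q_{3j}]). Let V (3×3n_x), W (3×3n_y) have orthonormal rows orthogonal to I_{n_x}, I_{n_y} respectively. Then the 3×3n matrix U = [Q_{11}^T V + √(n_y/n) Q_{13}^T I_{n_x}, Q_{12}^T W − √(n_x/n) Q_{13}^T I_{n_y}] has orthonormal rows, and its rows are orthogonal to the rows of I_{n_p} = [√(n_x/n) I_{n_x}, √(n_y/n) I_{n_y}]. -/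

import Mathlib

open Matrix

noncomputable def Imat (n : ℕ) : Matrix (Fin 3) (Fin n × Fin 3) ℝ :=
  fun a p => (1 / Real.sqrt n) * (if a = p.2 then 1 else 0)

/-- The `9 × 9` matrix whose `(i,j)` block is `(Q i j)ᵀ`, as in the
hierarchical QR factorization. -/
def bigQT (Q : Fin 3 → Fin 3 → Matrix (Fin 3) (Fin 3) ℝ) :
    Matrix (Fin 3 ⊕ Fin 3 ⊕ Fin 3) (Fin 3 ⊕ Fin 3 ⊕ Fin 3) ℝ :=
  fun i j =>
    match i, j with
    | .inl a, .inl b => (Q 0 0)ᵀ a b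
    | .inl a, .inr (.inl b) => (Q 0 1)ᵀ a b
    | .inl a, .inr (.inr b) => (Q 0 2)ᵀ a b
    | .inr (.inl a), .inl b => (Q 1 0)ᵀ a b
    | .inr (.inl a), .inr (.inl b) => (Q 1 1)ᵀ a b
    | .inr (.inl a), .inr (.inr b) => (Q 1 2)ᵀ a b
    | .inr (.inr a), .inl b => (Q 2 0)ᵀ a b
    | .inr (.inr a), .inr (.inl b) => (Q 2 1)ᵀ a b
    | .inr (.inr a), .inr (.inr b) => (Q 2 2)ᵀ a b

/-- The parent's normalized identity block `[√(nx/n) I_{nx}, √(ny/n) I_{ny}]`. -/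
noncomputable def InpCat (nx ny : ℕ) :
    Matrix (Fin 3) ((Fin nx × Fin 3) ⊕ (Fin ny × Fin 3)) ℝ :=
  Matrix.of fun a =>
    Sum.elim (fun c => Real.sqrt ((nx : ℝ) / (nx + ny)) * Imat nx a c)
             (fun c => Real.sqrt ((ny : ℝ) / (nx + ny)) * Imat ny a c)

/-- The parent's `U` block
`[Q₁₁ᵀ V + √(ny/n) Q₁₃ᵀ I_{nx}, Q₁₂ᵀ W − √(nx/n) Q₁₃ᵀ I_{ny}]`. -/
noncomputable def Upar {nx ny : ℕ} (Q : Fin 3 → Fin 3 → Matrix (Fin 3) (Fin 3) ℝ)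
    (V : Matrix (Fin 3) (Fin nx × Fin 3) ℝ)
    (W : Matrix (Fin 3) (Fin ny × Fin 3) ℝ) :
    Matrix (Fin 3) ((Fin nx × Fin 3) ⊕ (Fin ny × Fin 3)) ℝ :=
  Matrix.of fun a =>
    Sum.elim
      (((Q 0 0)ᵀ * V + Real.sqrt ((ny : ℝ) / (nx + ny)) • ((Q 0 2)ᵀ * Imat nx)) a)
      (((Q 0 1)ᵀ * W - Real.sqrt ((nx : ℝ) / (nx + ny)) • ((Q 0 2)ᵀ * Imat ny)) a)

lemma Imat_mul_transpose {n : ℕ} (hn : 1 ≤ n) : Imat n * (Imat n)ᵀ = 1 := by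
  have h0 : (0:ℝ) < n := by exact_mod_cast hn
  have hns : Real.sqrt n ≠ 0 := by positivity
  ext a b
  simp only [Matrix.mul_apply, Imat, Matrix.transpose_apply, Matrix.one_apply,
    Fintype.sum_prod_type]
  rw [Finset.sum_comm]
  have hterm : ∀ j : Fin 3, (∑ _i : Fin n,
      (1 / Real.sqrt n * (if a = j then (1:ℝ) else 0)) *
      (1 / Real.sqrt n * (if b = j then 1 else 0))) =
      if a = j then (if b = j then (1:ℝ) else 0) else 0 := by
    intro j
    rw [Finset.sum_const, Finset.card_univ, Fintype.card_fin, nsmul_eq_mul]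
    by_cases h1 : a = j <;> by_cases h2 : b = j <;> simp [h1, h2] <;> field_simp <;> rw [Real.sq_sqrt h0.le]
  simp only [hterm]
  simp [Finset.sum_ite_eq]
  by_cases hab : a = b <;> simp [hab, eq_comm]

theorem stmt19 {nx ny : ℕ} (hx : 1 ≤ nx) (hy : 1 ≤ ny)
    (Q : Fin 3 → Fin 3 → Matrix (Fin 3) (Fin 3) ℝ)
    (hQ1 : (bigQT Q)ᵀ * bigQT Q = 1) (hQ2 : bigQT Q * (bigQT Q)ᵀ = 1)
    (V : Matrix (Fin 3) (Fin nx × Fin 3) ℝ)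
    (W : Matrix (Fin 3) (Fin ny × Fin 3) ℝ)
    (hV : V * Vᵀ = 1) (hVI : V * (Imat nx)ᵀ = 0)
    (hW : W * Wᵀ = 1) (hWI : W * (Imat ny)ᵀ = 0) :
    Upar Q V W * (Upar Q V W)ᵀ = 1 ∧
      Upar Q V W * (InpCat nx ny)ᵀ = 0 := by
  set A := (Q 0 0)ᵀ
  set B := (Q 0 1)ᵀ
  set C := (Q 0 2)ᵀ
  have hn0 : (0:ℝ) < (nx:ℝ) + ny := by
    have : (1:ℝ) ≤ (nx:ℝ) := by exact_mod_cast hx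
    have h2 : (0:ℝ) ≤ (ny:ℝ) := by positivity
    linarith
  set s : ℝ := Real.sqrt ((ny : ℝ) / (nx + ny)) with hs
  set t : ℝ := Real.sqrt ((nx : ℝ) / (nx + ny)) with ht
  have hss : s * s = (ny : ℝ) / (nx + ny) := Real.mul_self_sqrt (by positivity)
  have htt : t * t = (nx : ℝ) / (nx + ny) := Real.mul_self_sqrt (by positivity)
  have hst1 : t * t + s * s = 1 := by
    rw [hss, htt]; field_simp
  -- block identity from orthogonality of bigQT
  have hblock : A * Aᵀ + B * Bᵀ + C * Cᵀ = 1 := by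
    ext a b
    have h := congrFun (congrFun hQ2 (Sum.inl a)) (Sum.inl b)
    simp only [Matrix.mul_apply, Matrix.transpose_apply, Fintype.sum_sum_type,
      bigQT, Matrix.one_apply] at h
    simp only [Matrix.add_apply, Matrix.mul_apply, Matrix.transpose_apply,
      Matrix.one_apply, A, B, C]
    rw [add_assoc]
    simpa using h
  set M1 : Matrix (Fin 3) (Fin nx × Fin 3) ℝ := A * V + s • (C * Imat nx) with hM1
  set M2 : Matrix (Fin 3) (Fin ny × Fin 3) ℝ := B * W - t • (C * Imat ny) with hM2
  have hUeq : Upar Q V W = Matrix.fromCols M1 M2 := rfl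
  have hIeq : InpCat nx ny = Matrix.fromCols (t • Imat nx) (s • Imat ny) := by
    ext a c
    cases c <;> rfl
  have hIx : Imat nx * (Imat nx)ᵀ = 1 := Imat_mul_transpose hx
  have hIy : Imat ny * (Imat ny)ᵀ = 1 := Imat_mul_transpose hy
  have hIV : Imat nx * Vᵀ = 0 := by
    have := congrArg Matrix.transpose hVI
    simpa [Matrix.transpose_mul] using this
  have hIW : Imat ny * Wᵀ = 0 := by
    have := congrArg Matrix.transpose hWI
    simpa [Matrix.transpose_mul] using this
  have hM1M1 : M1 * M1ᵀ = A * Aᵀ + (s * s) • (C * Cᵀ) := by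
    have h1 : V * ((Imat nx)ᵀ * Cᵀ) = 0 := by rw [← Matrix.mul_assoc, hVI, Matrix.zero_mul]
    have h2 : Imat nx * (Vᵀ * Aᵀ) = 0 := by rw [← Matrix.mul_assoc, hIV, Matrix.zero_mul]
    have h3 : V * (Vᵀ * Aᵀ) = Aᵀ := by rw [← Matrix.mul_assoc, hV, Matrix.one_mul]
    have h4 : Imat nx * ((Imat nx)ᵀ * Cᵀ) = Cᵀ := by
      rw [← Matrix.mul_assoc, hIx, Matrix.one_mul]
    rw [hM1]
    simp only [Matrix.transpose_add, Matrix.transpose_smul, Matrix.transpose_mul,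
      Matrix.add_mul, Matrix.mul_add, Matrix.mul_smul, Matrix.smul_mul, smul_smul,
      Matrix.mul_assoc, h1, h2, h3, h4, Matrix.mul_zero, smul_zero, add_zero, zero_add]
  have hM2M2 : M2 * M2ᵀ = B * Bᵀ + (t * t) • (C * Cᵀ) := by
    have h1 : W * ((Imat ny)ᵀ * Cᵀ) = 0 := by rw [← Matrix.mul_assoc, hWI, Matrix.zero_mul]
    have h2 : Imat ny * (Wᵀ * Bᵀ) = 0 := by rw [← Matrix.mul_assoc, hIW, Matrix.zero_mul]
    have h3 : W * (Wᵀ * Bᵀ) = Bᵀ := by rw [← Matrix.mul_assoc, hW, Matrix.one_mul]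
    have h4 : Imat ny * ((Imat ny)ᵀ * Cᵀ) = Cᵀ := by
      rw [← Matrix.mul_assoc, hIy, Matrix.one_mul]
    rw [hM2]
    simp only [Matrix.transpose_sub, Matrix.transpose_smul, Matrix.transpose_mul,
      Matrix.sub_mul, Matrix.mul_sub, Matrix.mul_smul, Matrix.smul_mul, smul_smul,
      Matrix.mul_assoc, h1, h2, h3, h4, Matrix.mul_zero, smul_zero, sub_zero, zero_sub,
      smul_neg, sub_neg_eq_add]
  constructor
  · rw [hUeq, Matrix.transpose_fromCols, Matrix.fromCols_mul_fromRows,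
      hM1M1, hM2M2]
    have : A * Aᵀ + (s*s) • (C * Cᵀ) + (B * Bᵀ + (t*t) • (C * Cᵀ))
        = A * Aᵀ + B * Bᵀ + ((t*t + s*s) • (C * Cᵀ)) := by
      rw [add_smul]; abel
    rw [this, hst1, one_smul, hblock]
  · rw [hUeq, hIeq, Matrix.transpose_fromCols, Matrix.fromCols_mul_fromRows]
    rw [Matrix.transpose_smul, Matrix.transpose_smul]
    rw [Matrix.mul_smul, Matrix.mul_smul, hM1, hM2]
    rw [Matrix.add_mul, Matrix.sub_mul]
    rw [Matrix.mul_assoc A V (Imat nx)ᵀ, hVI, Matrix.mul_zero]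
    rw [Matrix.mul_assoc B W (Imat ny)ᵀ, hWI, Matrix.mul_zero]
    rw [Matrix.smul_mul, Matrix.smul_mul]
    rw [Matrix.mul_assoc C (Imat nx) (Imat nx)ᵀ, hIx, Matrix.mul_one]
    rw [Matrix.mul_assoc C (Imat ny) (Imat ny)ᵀ, hIy, Matrix.mul_one]
    rw [zero_add, zero_sub, smul_neg, smul_smul, smul_smul, mul_comm t s]
    exact add_neg_cancel _
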